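/- arXiv:1810.05230 — 3 statements merged into one kernel-verified Lean document; each statement's English description precedes it below -/
import Mathlib

section
/- Let J be as given. If ν ∈ E^* is a prefix of some μ ∈ J_1, then the subfamily {μ' ∈ J_1 : ν ≼ μ'} is a partition of ν, i.e. the cylinder sets Z(μ') with μ' ∈ J_1 and ν ≼ μ' are pairwise disjoint and their union is Z(ν). The same conclusion holds with J_2 in place of J_1. -/
/-- A finite directed multigraph. -/
structure FinGraph where
  V : Type
  E : Type
  fintV : Fintype V
  fintE : Fintype E
  src : E → V
  rng : E → V

variable {G : FinGraph}

/-- A finite path in the graph `G`: a source vertex together with a compatible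
list of edges (a vertex is a path of length 0). -/
structure FPath (G : FinGraph) where
  source : G.V
  edges : List G.E
  head_src : ∀ e ∈ edges.head?, G.src e = source
  chain : edges.Chain' fun e f => G.rng e = G.src f

/-- The range (terminal vertex) of a finite path. -/
def FPath.range (p : FPath G) : G.V :=
  p.edges.getLast?.elim p.source G.rng

/-- The length-0 path at a vertex. -/
def FPath.nil (G : FinGraph) (v : G.V) : FPath G :=
  ⟨v, [], by simp, List.isChain_nil⟩

/-- `p.Prefix q` : the path `p` is an initial segment of the path `q`. -/
def FPath.Prefix (p q : FPath G) : Prop :=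
  p.source = q.source ∧ p.edges <+: q.edges

/-- The path obtained by removing the first edge (the tail `κ` of `ν = eκ`). -/
def FPath.tail (p : FPath G) : FPath G where
  source := p.edges.head?.elim p.source G.rng
  edges := p.edges.tail
  head_src := by
    cases hp : p.edges with
    | nil => simp
    | cons a l =>
      have h := p.chain
      rw [hp, List.Chain', List.isChain_cons] at h
      intro e he
      simp only [hp, List.head?_cons, Option.elim, List.tail_cons] at he ⊢
      exact (h.1 e he).symm
  chain := p.chain.tail

/-- An infinite path in the graph `G`. -/
structure IPath (G : FinGraph) where
  edges : ℕ → G.E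
  chain : ∀ i, G.rng (edges i) = G.src (edges (i + 1))

/-- The source vertex of an infinite path. -/
def IPath.source (p : IPath G) : G.V := G.src (p.edges 0)

/-- The cylinder set `Z(p)` of a finite path `p`: all infinite paths with prefix `p`. -/
def cylinder (p : FPath G) : Set (IPath G) :=
  {q | q.source = p.source ∧ ∀ i, (h : i < p.edges.length) → q.edges i = p.edges.get ⟨i, h⟩}

/-- A finite collection `S` of finite paths is a partition of the path `ν`:
the cylinder sets are pairwise disjoint with union `Z(ν)`. -/
def IsPartitionOfPath (S : Set (FPath G)) (ν : FPath G) : Prop :=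
  S.Finite ∧ (∀ p ∈ S, ∀ q ∈ S, p ≠ q → cylinder p ∩ cylinder q = ∅) ∧
    (⋃ p ∈ S, cylinder p) = cylinder ν

/-- A finite collection `S` of finite paths is a partition of the vertex `v`. -/
def IsPartitionOf (S : Set (FPath G)) (v : G.V) : Prop :=
  IsPartitionOfPath S (FPath.nil G v)

/-- Standing assumptions: no sinks, no sources, every cycle has an exit. -/
structure Standing (G : FinGraph) : Prop where
  no_sinks : ∀ v : G.V, ∃ e, G.src e = v
  no_sources : ∀ v : G.V, ∃ e, G.rng e = v
  cycles_exit : ∀ p : FPath G, p.edges ≠ [] → p.range = p.source →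
    ∃ e ∈ p.edges, ∃ f, f ≠ e ∧ G.src f = G.src e

/-- The combinatorial conditions making `u_J = Σ_{(μ,ν) ∈ J} S_μ S_ν^*` a unitary:
`J` is finite, `s(μ) = s(ν)`, `r(μ) = r(ν)`, `|ν| ≥ 1` for all `(μ,ν) ∈ J`, and both
families of cylinder sets are pairwise disjoint with union all of `E^∞`. -/
structure IsUnitaryJ (G : FinGraph) (J : Set (FPath G × FPath G)) : Prop where
  finite : J.Finite
  src_eq : ∀ p ∈ J, (Prod.fst p).source = (Prod.snd p).source
  rng_eq : ∀ p ∈ J, FPath.range (Prod.fst p) = FPath.range (Prod.snd p)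
  ne_nil : ∀ p ∈ J, (Prod.snd p).edges ≠ []
  disj₁ : ∀ p ∈ J, ∀ q ∈ J, p ≠ q → cylinder (Prod.fst p) ∩ cylinder (Prod.fst q) = ∅
  union₁ : (⋃ p ∈ J, cylinder (Prod.fst p)) = Set.univ
  disj₂ : ∀ p ∈ J, ∀ q ∈ J, p ≠ q → cylinder (Prod.snd p) ∩ cylinder (Prod.snd q) = ∅
  union₂ : (⋃ p ∈ J, cylinder (Prod.snd p)) = Set.univ

/-- Adjacency in the coding graph `E_J`: there is an edge from `p = (μ₁, e₁ν₁)` to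
`q = (μ₂, e₂ν₂)` iff the tail `ν₁` and `μ₂` are prefix-comparable
(the combinatorial content of `S_{ν₁}^* S_{μ₂} ≠ 0`). -/
def CGAdj (p q : FPath G × FPath G) : Prop :=
  FPath.Prefix p.2.tail q.1 ∨ FPath.Prefix q.1 p.2.tail

/-- The degree `|μ₂| − |ν₁|` of the coding-graph edge from `p` to `q`. -/
def cgDeg (p q : FPath G × FPath G) : ℤ :=
  (q.1.edges.length : ℤ) - (p.2.tail.edges.length : ℤ)

/-- `IsAppend p q r` : the path `r` is the concatenation `p q`. -/
def IsAppend (p q r : FPath G) : Prop :=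
  r.source = p.source ∧ q.source = p.range ∧ r.edges = p.edges ++ q.edges

/-- A finite path in the coding graph `E_J`, recorded by the (nonempty) list of
vertices of `J` it visits (a single vertex is a path of length 0). -/
structure CGPath (G : FinGraph) (J : Set (FPath G × FPath G)) where
  verts : List (FPath G × FPath G)
  ne : verts ≠ []
  mem : ∀ v ∈ verts, v ∈ J
  adj : verts.Chain' CGAdj

/-- The `E`-label of a path in the coding graph: the list of distinguished first
edges `e` of the second coordinates of the vertices it visits. -/
def CGPath.elabel {J : Set (FPath G × FPath G)} (ω : CGPath G J) : List G.E :=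
  ω.verts.filterMap fun v => v.2.edges.head?

/-- `IsLabelOf l γ` : `γ` is the `L_J`-label of the coding-graph path visiting the
vertices in the list `l` (all of whose edges are non-negative): the concatenation of
the `L_J`-labels of its edges, and the empty path at `r(μ)` for the length-0 path
at a vertex `(μ, eν)`. -/
inductive IsLabelOf : List (FPath G × FPath G) → FPath G → Prop
  | single (p : FPath G × FPath G) (γ : FPath G) :
      γ.edges = [] → γ.source = FPath.range p.1 → IsLabelOf [p] γ
  | cons (p q : FPath G × FPath G) (rest : List (FPath G × FPath G)) (α γ δ : FPath G) :
      IsAppend p.2.tail α q.1 → IsLabelOf (q :: rest) γ → IsAppend α γ δ →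
      IsLabelOf (p :: q :: rest) δ

/-- Every edge of the coding graph `E_J` is non-negative. -/
def AllEdgesNonneg (G : FinGraph) (J : Set (FPath G × FPath G)) : Prop :=
  ∀ p ∈ J, ∀ q ∈ J, CGAdj p q → 0 ≤ cgDeg p q

/-- The coding graph `E_J` contains a non-positive cycle. -/
def HasNonposCycle (G : FinGraph) (J : Set (FPath G × FPath G)) : Prop :=
  ∃ ω : CGPath G J, 2 ≤ ω.verts.length ∧ ω.verts.getLast ω.ne = ω.verts.head ω.ne ∧
    ω.verts.Chain' fun p q => cgDeg p q ≤ 0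

/-- All outgoing edges of the vertex `p` in the coding graph `E_J` are positive. -/
def AllOutPositive (G : FinGraph) (J : Set (FPath G × FPath G))
    (p : FPath G × FPath G) : Prop :=
  ∀ q ∈ J, CGAdj p q → 0 < cgDeg p q

/-- `IsSnoc p f q` : the path `q` is `p` extended by the single edge `f`. -/
def IsSnoc (p : FPath G) (f : G.E) (q : FPath G) : Prop :=
  q.source = p.source ∧ q.edges = p.edges ++ [f]

/-- `IsSplitting G J p J'` : `J'` is the splitting of `J` at the vertex `p = (μ, eν)`,
i.e. `J' = (J ∖ {(μ,eν)}) ∪ {(μf, eνf) : f ∈ E¹, s(f) = r(μ)}`. -/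
def IsSplitting (G : FinGraph) (J : Set (FPath G × FPath G)) (p : FPath G × FPath G)
    (J' : Set (FPath G × FPath G)) : Prop :=
  p ∈ J ∧ ∀ q, q ∈ J' ↔ (q ∈ J ∧ q ≠ p) ∨
    ∃ f, G.src f = FPath.range p.1 ∧ IsSnoc p.1 f q.1 ∧ IsSnoc p.2 f q.2

/-- The set of negative edges of the coding graph `E_J`. -/
def negEdgeSet (G : FinGraph) (J : Set (FPath G × FPath G)) :
    Set ((FPath G × FPath G) × (FPath G × FPath G)) :=
  {e | e.1 ∈ J ∧ e.2 ∈ J ∧ CGAdj e.1 e.2 ∧ cgDeg e.1 e.2 < 0}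

/-- `IsFinalNeg G J p q ω d` : the edge from `p` to `q` in `E_J` is a final negative
edge with destination `d`, via the zero path `ω` from `q` to `d`; the height of the
edge is `ω.verts.length - 1`. -/
def IsFinalNeg (G : FinGraph) (J : Set (FPath G × FPath G))
    (p q : FPath G × FPath G) (ω : CGPath G J) (d : FPath G × FPath G) : Prop :=
  p ∈ J ∧ q ∈ J ∧ CGAdj p q ∧ cgDeg p q < 0 ∧
    ω.verts.head ω.ne = q ∧ ω.verts.getLast ω.ne = d ∧
    (ω.verts.Chain' fun a b => cgDeg a b = 0) ∧ AllOutPositive G J d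

/-- `(E_J, E)` is left-synchronizing with delay `m` : any two paths of length `m`
(i.e. with `m+1` vertices) in `E_J` with the same `E`-label have the same source. -/
def LeftSyncDelay (G : FinGraph) (J : Set (FPath G × FPath G)) (m : ℕ) : Prop :=
  ∀ ω ξ : CGPath G J, ω.verts.length = m + 1 → ξ.verts.length = m + 1 →
    ω.elabel = ξ.elabel → ω.verts.head ω.ne = ξ.verts.head ξ.ne

/-- An infinite path in the coding graph `E_J`. -/
structure CGIPath (G : FinGraph) (J : Set (FPath G × FPath G)) where
  verts : ℕ → FPath G × FPath G
  mem : ∀ i, verts i ∈ J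
  adj : ∀ i, CGAdj (verts i) (verts (i + 1))

/-- The infinite `E`-label of an infinite coding-graph path is the infinite path `α`. -/
def ELabelInf {J : Set (FPath G × FPath G)} (ω : CGIPath G J) (α : IPath G) : Prop :=
  ∀ i, (ω.verts i).2.edges.head? = some (α.edges i)

/-- A transducer with input alphabet `A`, output alphabet `B`, a finite state set,
an initial state and a transition function. -/
structure Transducer (A B : Type) where
  S : Type
  finS : Finite S
  init : S
  tr : S → A → S × List B

/-- The state sequence of a transducer on an infinite input word. -/
def Transducer.states {A B : Type} (T : Transducer A B) (α : ℕ → A) : ℕ → T.S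
  | 0 => T.init
  | n + 1 => (T.tr (T.states α n) (α n)).1

/-- The `n`-th output block of a transducer on an infinite input word. -/
def Transducer.outBlock {A B : Type} (T : Transducer A B) (α : ℕ → A) (n : ℕ) : List B :=
  (T.tr (T.states α n) (α n)).2

/-- The concatenation of the first `n` blocks of a sequence of finite words. -/
def joinUpTo {X : Type} (f : ℕ → List X) (n : ℕ) : List X :=
  ((List.range n).map f).flatten

/-- Two infinite concatenations of sequences of finite words are equal. -/
def StreamsEq {X : Type} (f g : ℕ → List X) : Prop :=
  (∀ n, ∃ m, joinUpTo f n <+: joinUpTo g m) ∧ ∀ n, ∃ m, joinUpTo g n <+: joinUpTo f m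

/-- The type of edges of the coding graph `E_J`. -/
def CGEdgeT (G : FinGraph) (J : Set (FPath G × FPath G)) : Type :=
  {e : (FPath G × FPath G) × (FPath G × FPath G) // e.1 ∈ J ∧ e.2 ∈ J ∧ CGAdj e.1 e.2}

/-- The sequence of edges of an infinite coding-graph path. -/
def CGIPath.edgeSeq {J : Set (FPath G × FPath G)} (ω : CGIPath G J) (i : ℕ) : CGEdgeT G J :=
  ⟨(ω.verts i, ω.verts (i + 1)), ω.mem i, ω.mem (i + 1), ω.adj i⟩


section Aux
variable {G : FinGraph}

/-- A chosen outgoing edge at each vertex. -/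
noncomputable def auxNext (hG : Standing G) (v : G.V) : G.E := (hG.no_sinks v).choose

lemma auxNext_src (hG : Standing G) (v : G.V) : G.src (auxNext hG v) = v :=
  (hG.no_sinks v).choose_spec

/-- An infinite sequence of composable edges starting at `v`. -/
noncomputable def auxSeq (hG : Standing G) (v : G.V) : ℕ → G.E
  | 0 => auxNext hG v
  | n + 1 => auxNext hG (G.rng (auxSeq hG v n))

lemma auxSeq_src (hG : Standing G) (v : G.V) : G.src (auxSeq hG v 0) = v :=
  auxNext_src hG v

lemma auxSeq_chain (hG : Standing G) (v : G.V) (n : ℕ) :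
    G.rng (auxSeq hG v n) = G.src (auxSeq hG v (n + 1)) :=
  (auxNext_src hG _).symm

lemma cylinder_nonempty (hG : Standing G) (μ : FPath G) : (cylinder μ).Nonempty := by
  classical
  set L := μ.edges.length with hL
  refine ⟨⟨fun i => if h : i < L then μ.edges.get ⟨i, h⟩ else auxSeq hG μ.range (i - L), ?_⟩, ?_, ?_⟩
  · intro i
    by_cases h1 : i + 1 < L
    · have hi : i < L := by omega
      simp only [dif_pos h1, dif_pos hi]
      exact List.isChain_iff_getElem.mp μ.chain i (by omega)
    · by_cases h0 : i < L
      · have hiL : i = L - 1 := by omega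
        simp only [dif_pos h0, dif_neg h1]
        have hne : μ.edges ≠ [] := by
          intro hc; rw [hc] at hL; simp [hL] at h0
        have hlast : μ.range = G.rng (μ.edges.get ⟨i, h0⟩) := by
          have h2 : μ.edges.getLast hne = μ.edges.get ⟨i, h0⟩ := by
            rw [List.getLast_eq_getElem]
            simp only [List.get_eq_getElem]
            congr 1
            omega
          rw [FPath.range, List.getLast?_eq_getLast hne, h2]
          rfl
        have : i + 1 - L = 0 := by omega
        rw [this, hlast, auxSeq_src]
      · simp only [dif_neg h0, dif_neg h1]
        have : i + 1 - L = (i - L) + 1 := by omega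
        rw [this]; exact auxSeq_chain hG μ.range (i - L)
  · show G.src _ = μ.source
    by_cases h0 : 0 < L
    · simp only [dif_pos h0]
      have hne : μ.edges ≠ [] := by
        intro hc; rw [hc] at hL; simp [hL] at h0
      obtain ⟨a, t, he⟩ : ∃ a t, μ.edges = a :: t := by
        cases he : μ.edges with
        | nil => exact absurd he hne
        | cons a t => exact ⟨a, t, rfl⟩
      have h2 : μ.edges.get ⟨0, h0⟩ = a := by
        simp only [List.get_eq_getElem]
        rw [List.getElem_of_eq he]
        rfl
      rw [h2]
      exact μ.head_src a (by simp [he])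
    · simp only [dif_neg h0]
      have h00 : (0 : ℕ) - L = 0 := by omega
      rw [h00, auxSeq_src]
      have hnil : μ.edges = [] := by
        cases he : μ.edges with
        | nil => rfl
        | cons a t => rw [he] at hL; simp [hL] at h0
      simp [FPath.range, hnil]
  · intro i h
    exact dif_pos h

lemma cylinder_mono {p q : FPath G} (h : FPath.Prefix p q) : cylinder q ⊆ cylinder p := by
  rintro x ⟨hs, he⟩
  refine ⟨hs.trans h.1.symm, fun i hi => ?_⟩
  have hi' : i < q.edges.length := hi.trans_le h.2.length_le
  rw [he i hi']
  exact (h.2.getElem hi).symm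

lemma prefix_of_cylinders {p q : FPath G} {x : IPath G} (hx : x ∈ cylinder p)
    (hy : x ∈ cylinder q) (hl : p.edges.length ≤ q.edges.length) : FPath.Prefix p q := by
  refine ⟨hx.1.symm.trans hy.1, ?_⟩
  rw [List.prefix_iff_eq_take]
  refine List.ext_get (by simp [hl]) fun i h1 h2 => ?_
  have hiq : i < q.edges.length := by omega
  simp only [List.get_eq_getElem, List.getElem_take]
  have := hx.2 i h1
  have := hy.2 i hiq
  simp_all

end Aux

lemma partition_aux (hG : Standing G) (J : Set (FPath G × FPath G))
    (f : FPath G × FPath G → FPath G) (hfin : J.Finite)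
    (disj : ∀ p ∈ J, ∀ q ∈ J, p ≠ q → cylinder (f p) ∩ cylinder (f q) = ∅)
    (hun : (⋃ p ∈ J, cylinder (f p)) = Set.univ) (ν : FPath G)
    (h : ∃ μ ∈ f '' J, FPath.Prefix ν μ) :
    IsPartitionOfPath {μ' ∈ f '' J | FPath.Prefix ν μ'} ν := by
  obtain ⟨μ, ⟨b, hbJ, hbμ⟩, hνμ⟩ := h
  refine ⟨((hfin.image f).subset (Set.sep_subset _ _)), ?_, ?_⟩
  · rintro p ⟨⟨a, haJ, rfl⟩, -⟩ q ⟨⟨c, hcJ, rfl⟩, -⟩ hpq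
    exact disj a haJ c hcJ (fun h => hpq (by rw [h]))
  · apply Set.Subset.antisymm
    · rintro x hx
      simp only [Set.mem_iUnion] at hx
      obtain ⟨p, ⟨-, hp2⟩, hxp⟩ := hx
      exact cylinder_mono hp2 hxp
    · intro x hx
      have hxu : x ∈ ⋃ p ∈ J, cylinder (f p) := hun ▸ Set.mem_univ x
      simp only [Set.mem_iUnion] at hxu
      obtain ⟨a, haJ, hxa⟩ := hxu
      have hle : ν.edges.length ≤ (f a).edges.length := by
        by_contra hlt
        push_neg at hlt
        have h1 : FPath.Prefix (f a) ν := prefix_of_cylinders hxa hx hlt.le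
        have h2 : FPath.Prefix (f a) μ := ⟨h1.1.trans hνμ.1, h1.2.trans hνμ.2⟩
        have hab : a ≠ b := by
          intro hc
          subst hc
          rw [hbμ] at hlt
          exact absurd hνμ.2.length_le (by omega)
        obtain ⟨y, hy⟩ := cylinder_nonempty hG μ
        have : y ∈ cylinder (f a) ∩ cylinder (f b) :=
          ⟨cylinder_mono h2 hy, by rw [hbμ]; exact hy⟩
        rw [disj a haJ b hbJ hab] at this
        exact this
      have hνa : FPath.Prefix ν (f a) := prefix_of_cylinders hx hxa hle
      simp only [Set.mem_iUnion]
      exact ⟨f a, ⟨⟨a, haJ, rfl⟩, hνa⟩, hxa⟩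

/-- Lemma 2.6: if `ν` is a prefix of some `μ ∈ J₁`, then the subfamily
`{μ' ∈ J₁ : ν ≼ μ'}` is a partition of `ν`; similarly for `J₂`. -/
theorem partition_of_prefix (G : FinGraph) (hG : Standing G)
    (J : Set (FPath G × FPath G)) (hJ : IsUnitaryJ G J) (ν : FPath G) :
    ((∃ μ ∈ Prod.fst '' J, FPath.Prefix ν μ) →
      IsPartitionOfPath {μ' ∈ Prod.fst '' J | FPath.Prefix ν μ'} ν) ∧
    ((∃ μ ∈ Prod.snd '' J, FPath.Prefix ν μ) →
      IsPartitionOfPath {μ' ∈ Prod.snd '' J | FPath.Prefix ν μ'} ν) := by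
  exact ⟨partition_aux hG J Prod.fst hJ.finite hJ.disj₁ hJ.union₁ ν,
    partition_aux hG J Prod.snd hJ.finite hJ.disj₂ hJ.union₂ ν⟩
end

section
/- Let J be as given, with coding graph E_J. If a vertex (μ, eν) of E_J emits a positive edge, then every edge it emits is positive; moreover, writing for each edge from (μ, eν) to (δ, gγ) its L_J-label as the unique path α ∈ E^* with δ = να, the collection of these labels α over all edges emitted by (μ, eν) is a partition of r(μ). -/
variable {G : FinGraph}

section AuxProof

variable {G : FinGraph}

theorem FPath.ext' {p q : FPath G} (h1 : p.source = q.source) (h2 : p.edges = q.edges) :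
    p = q := by
  cases p; cases q
  simp only at h1 h2
  subst h1; subst h2; rfl

theorem range_of_nil {p : FPath G} (h : p.edges = []) : p.range = p.source := by
  simp [FPath.range, h]

theorem range_eq_rng_getElem {p : FPath G} (h : p.edges ≠ []) :
    p.range = G.rng (p.edges[p.edges.length - 1]'(Nat.sub_lt (List.length_pos_iff.mpr h)
      one_pos)) := by
  simp [FPath.range, List.getLast?_eq_getLast h, List.getLast_eq_getElem]

theorem FPath.tail_range (p : FPath G) (h : p.edges ≠ []) : p.tail.range = p.range := by
  obtain ⟨a, l, hl⟩ := List.exists_cons_of_ne_nil h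
  cases l with
  | nil => simp [FPath.range, FPath.tail, hl]
  | cons b l' =>
    simp [FPath.range, FPath.tail, hl, List.getLast?_cons_cons,
      List.getLast?_eq_getLast (l := b :: l') (by simp)]

theorem chainR (p : FPath G) {i : ℕ} (h : i + 1 < p.edges.length) :
    G.rng (p.edges[i]'(by omega)) = G.src (p.edges[i+1]'h) := by
  have := List.isChain_iff_getElem.mp p.chain i (by omega)
  simpa using this

/-- Any infinite continuation from a vertex, given no sinks. -/
noncomputable def anySeq (hG : ∀ v : G.V, ∃ e, G.src e = v) (v : G.V) : ℕ → G.E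
  | 0 => (hG v).choose
  | n+1 => (hG (G.rng (anySeq hG v n))).choose

noncomputable def anyPath (hG : ∀ v : G.V, ∃ e, G.src e = v) (v : G.V) : IPath G :=
  ⟨anySeq hG v, fun i => ((hG (G.rng (anySeq hG v i))).choose_spec).symm⟩

theorem anyPath_source (hG : ∀ v : G.V, ∃ e, G.src e = v) (v : G.V) :
    (anyPath hG v).source = v := (hG v).choose_spec

/-- Concatenation of a finite path and an infinite path. -/
def concatIP (p : FPath G) (x : IPath G) (hx : x.source = p.range) : IPath G where
  edges i := if h : i < p.edges.length then p.edges[i] else x.edges (i - p.edges.length)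
  chain i := by
    beta_reduce
    by_cases h1 : i + 1 < p.edges.length
    · rw [dif_pos (by omega : i < p.edges.length), dif_pos h1]
      exact chainR p h1
    · rw [dif_neg h1]
      by_cases h2 : i < p.edges.length
      · -- i + 1 = p.edges.length
        rw [dif_pos h2]
        have hne : p.edges ≠ [] := by
          intro hc; rw [hc] at h2; simp at h2
        have h4 : i + 1 - p.edges.length = 0 := by omega
        rw [h4]
        show G.rng _ = x.source
        rw [hx, range_eq_rng_getElem hne]
        have h6 : i = p.edges.length - 1 := by omega
        subst h6
        rfl
      · rw [dif_neg h2]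
        have : i + 1 - p.edges.length = (i - p.edges.length) + 1 := by omega
        rw [this]
        exact x.chain _

theorem concatIP_mem (p : FPath G) (x : IPath G) (hx : x.source = p.range) :
    concatIP p x hx ∈ cylinder p := by
  constructor
  · show G.src (if h : 0 < p.edges.length then p.edges[0] else x.edges (0 - p.edges.length)) =
      p.source
    by_cases h : 0 < p.edges.length
    · rw [dif_pos h]
      apply p.head_src
      rw [List.head?_eq_getElem?, List.getElem?_eq_getElem h]
      rfl
    · rw [dif_neg h]
      have h5 : G.src (x.edges (0 - p.edges.length)) = x.source := by
        rw [Nat.zero_sub]; rfl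
      rw [h5, hx, range_of_nil (by
        cases hl : p.edges with
        | nil => rfl
        | cons a l => rw [hl] at h; simp at h)]
  · intro i h
    show (if h' : i < p.edges.length then p.edges[i] else _) = _
    rw [dif_pos h]
    simp

theorem concatIP_mem_of_append {p α r : FPath G} {x : IPath G} (hap : IsAppend p α r)
    (hxα : x ∈ cylinder α) (hx : x.source = p.range) :
    concatIP p x hx ∈ cylinder r := by
  obtain ⟨hs, hαs, he⟩ := hap
  constructor
  · rw [(concatIP_mem p x hx).1, hs]
  · intro i h
    show (if h' : i < p.edges.length then p.edges[i] else x.edges (i - p.edges.length)) = _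
    by_cases h' : i < p.edges.length
    · rw [dif_pos h']
      simp only [List.get_eq_getElem, he]
      rw [List.getElem_append_left h']
    · rw [dif_neg h']
      have hi : i - p.edges.length < α.edges.length := by
        rw [he] at h
        simp only [List.length_append] at h
        omega
      have := hxα.2 (i - p.edges.length) (by simpa using hi)
      rw [this]
      simp only [List.get_eq_getElem, he]
      rw [List.getElem_append_right (by omega)]

theorem prefix_of_mem_cylinder {a b : FPath G} {y : IPath G}
    (ha : y ∈ cylinder a) (hb : y ∈ cylinder b)
    (hab : a.edges.length ≤ b.edges.length) : a.Prefix b := by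
  refine ⟨ha.1.symm.trans hb.1, ?_⟩
  rw [List.prefix_iff_eq_take]
  apply List.ext_getElem
  · simp [Nat.min_eq_left hab]
  · intro i h1 h2
    have hia : i < a.edges.length := h1
    have hib : i < b.edges.length := by omega
    have e1 := ha.2 i hia
    have e2 := hb.2 i hib
    simp only [List.get_eq_getElem] at e1 e2
    have h4 : (List.take a.edges.length b.edges)[i]'h2 = b.edges[i]'hib := by
      have h5 := List.getElem?_take_of_lt (l := b.edges) (j := a.edges.length) (i := i) hia
      rw [List.getElem?_eq_getElem h2, List.getElem?_eq_getElem hib] at h5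
      exact Option.some.inj h5
    rw [h4, ← e2, ← e1]

theorem isAppend_unique {p α β r : FPath G} (h1 : IsAppend p α r) (h2 : IsAppend p β r) :
    α = β :=
  FPath.ext' (h1.2.1.trans h2.2.1.symm)
    (List.append_cancel_left (h1.2.2.symm.trans h2.2.2))

theorem exists_append_of_prefix {p q : FPath G} (h : p.Prefix q) : ∃ α, IsAppend p α q := by
  obtain ⟨hs, hpre⟩ := h
  have htake : p.edges = q.edges.take p.edges.length := List.prefix_iff_eq_take.mp hpre
  refine ⟨⟨p.range, q.edges.drop p.edges.length, ?_,
      q.chain.suffix (List.drop_suffix _ _)⟩, hs.symm, rfl, ?_⟩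
  · intro e he
    rcases Nat.eq_zero_or_pos p.edges.length with h0 | h0
    · have hpe : p.edges = [] := List.length_eq_zero_iff.mp h0
      rw [range_of_nil hpe, hs]
      apply q.head_src
      simpa [h0] using he
    · rcases Nat.lt_or_ge p.edges.length q.edges.length with hlt | hge
      · rw [List.drop_eq_getElem_cons hlt] at he
        simp only [List.head?_cons, Option.mem_def, Option.some.injEq] at he
        subst he
        have hne : p.edges ≠ [] := by
          intro hc; rw [hc] at h0; simp at h0
        have h2 := chainR q (i := p.edges.length - 1) (by omega)
        simp only [Nat.sub_add_cancel h0] at h2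
        rw [range_eq_rng_getElem hne, hpre.getElem _, h2]
      · have hdr : q.edges.drop p.edges.length = [] := List.drop_eq_nil_of_le (by omega)
        rw [hdr] at he
        simp at he
  · show q.edges = p.edges ++ q.edges.drop p.edges.length
    conv_lhs => rw [← List.take_append_drop p.edges.length q.edges]
    rw [← htake]

end AuxProof

/-- Lemma 3.4(ii): if a vertex `(μ, eν)` of `E_J` emits a positive edge,
then every edge it emits is positive, and the `L_J`-labels `α` (with `δ = να`) of the
edges it emits form a partition of `r(μ)`. -/
theorem pos_edge_labels_partition (G : FinGraph) (hG : Standing G)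
    (J : Set (FPath G × FPath G)) (hJ : IsUnitaryJ G J)
    (p : FPath G × FPath G) (hp : p ∈ J)
    (hpos : ∃ q ∈ J, CGAdj p q ∧ 0 < cgDeg p q) :
    (∀ q ∈ J, CGAdj p q → 0 < cgDeg p q) ∧
    IsPartitionOf {α : FPath G | ∃ q ∈ J, CGAdj p q ∧ IsAppend p.2.tail α q.1}
      (FPath.range p.1) := by
  classical
  obtain ⟨q₀, hq₀J, hadj₀, hdeg₀⟩ := hpos
  set ν := p.2.tail with hν
  have hν_ne : p.2.edges ≠ [] := hJ.ne_nil p hp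
  have hlen_eq : ν.edges.length = p.2.tail.edges.length := rfl
  have hνrange : ν.range = FPath.range p.1 := by
    rw [hν, FPath.tail_range p.2 hν_ne, ← hJ.rng_eq p hp]
  -- q₀.1 strictly extends ν
  have hpre₀ : ν.Prefix q₀.1 := by
    rcases hadj₀ with h | h
    · exact h
    · exfalso
      have := h.2.length_le
      unfold cgDeg at hdeg₀
      omega
  have hlt₀ : ν.edges.length < q₀.1.edges.length := by
    simp only [cgDeg] at hdeg₀; omega
  -- Part (i)
  have part1 : ∀ q ∈ J, CGAdj p q → 0 < cgDeg p q := by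
    intro q hqJ hadj
    by_contra hcon
    push_neg at hcon
    have hle : q.1.edges.length ≤ ν.edges.length := by
      simp only [cgDeg] at hcon; omega
    have hpre : q.1.edges <+: ν.edges := by
      rcases hadj with h | h
      · have := h.2.length_le
        have : q.1.edges = ν.edges := (h.2.eq_of_length (by omega)).symm
        rw [this]
      · exact h.2
    have hsrc : q.1.source = ν.source := by
      rcases hadj with h | h
      · exact h.1.symm
      · exact h.1
    -- build infinite path in Z(q₀.1) ∩ Z(q.1)
    set y := concatIP q₀.1 (anyPath hG.no_sinks q₀.1.range) (anyPath_source _ _) with hy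
    have hy₀ : y ∈ cylinder q₀.1 := concatIP_mem _ _ _
    have hyq : y ∈ cylinder q.1 := by
      constructor
      · rw [hy₀.1, hsrc, hpre₀.1]
      · intro i hi
        have hiν : i < ν.edges.length := by omega
        have hiq₀ : i < q₀.1.edges.length := by omega
        have e1 := hy₀.2 i hiq₀
        simp only [List.get_eq_getElem] at e1 ⊢
        rw [e1, ← hpre₀.2.getElem hiν, ← hpre.getElem hi]
    have hne : q ≠ q₀ := by
      intro hc; subst hc; omega
    have := hJ.disj₁ q hqJ q₀ hq₀J hne
    exact absurd this (by
      intro hc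
      have : y ∈ cylinder q.1 ∩ cylinder q₀.1 := ⟨hyq, hy₀⟩
      rw [hc] at this
      exact this)
  refine ⟨part1, ?_, ?_, ?_⟩
  -- finiteness
  · have hsub : {α : FPath G | ∃ q ∈ J, CGAdj p q ∧ IsAppend p.2.tail α q.1} ⊆
        ⋃ q ∈ J, {α : FPath G | IsAppend p.2.tail α q.1} := by
      rintro α ⟨q, hqJ, _, hap⟩
      exact Set.mem_biUnion hqJ hap
    refine Set.Finite.subset (Set.Finite.biUnion hJ.finite fun q _ => ?_) hsub
    apply Set.Subsingleton.finite
    intro α hα β hβ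
    exact isAppend_unique hα hβ
  -- disjointness
  · rintro α ⟨q, hqJ, _, hap⟩ β ⟨q', hq'J, _, hap'⟩ hne
    rw [Set.eq_empty_iff_forall_notMem]
    rintro x ⟨hxα, hxβ⟩
    have hxs : x.source = ν.range := by rw [hxα.1, hap.2.1]
    set y := concatIP ν x hxs with hy
    have hyq : y ∈ cylinder q.1 := concatIP_mem_of_append hap hxα hxs
    have hyq' : y ∈ cylinder q'.1 := concatIP_mem_of_append hap' hxβ hxs
    rcases eq_or_ne q q' with hqq | hqq
    · subst hqq
      exact hne (isAppend_unique hap hap')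
    · have := hJ.disj₁ q hqJ q' hq'J hqq
      have hmem : y ∈ cylinder q.1 ∩ cylinder q'.1 := ⟨hyq, hyq'⟩
      rw [this] at hmem
      exact hmem
  -- union
  · ext x
    simp only [Set.mem_iUnion, Set.mem_setOf_eq]
    constructor
    · rintro ⟨α, ⟨q, hqJ, _, hap⟩, hxα⟩
      refine ⟨?_, ?_⟩
      · rw [hxα.1, hap.2.1, hνrange]
        rfl
      · intro i hi
        simp [FPath.nil] at hi
    · rintro ⟨hxs, -⟩
      have hxs' : x.source = ν.range := by
        rw [hνrange]
        exact hxs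
      set y := concatIP ν x hxs' with hy
      have hyν : y ∈ cylinder ν := concatIP_mem _ _ _
      have : y ∈ ⋃ r ∈ J, cylinder (Prod.fst r) := by rw [hJ.union₁]; trivial
      simp only [Set.mem_iUnion] at this
      obtain ⟨q, hqJ, hyq⟩ := this
      have hadj : CGAdj p q := by
        rcases Nat.le_total ν.edges.length q.1.edges.length with hle | hle
        · exact Or.inl (prefix_of_mem_cylinder hyν hyq hle)
        · exact Or.inr (prefix_of_mem_cylinder hyq hyν hle)
      have hdeg := part1 q hqJ hadj
      have hlen : ν.edges.length < q.1.edges.length := by simp only [cgDeg] at hdeg; omega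
      have hpre : ν.Prefix q.1 := prefix_of_mem_cylinder hyν hyq (by omega)
      obtain ⟨α, hap⟩ := exists_append_of_prefix hpre
      refine ⟨α, ⟨q, hqJ, hadj, hap⟩, ?_, ?_⟩
      · rw [hap.2.1, ← hxs']
      · intro i hi
        have hαlen : α.edges.length = q.1.edges.length - ν.edges.length := by
          have := hap.2.2
          have : q.1.edges.length = ν.edges.length + α.edges.length := by
            rw [hap.2.2]; simp
          omega
        have hqi : ν.edges.length + i < q.1.edges.length := by omega
        have e1 := hyq.2 (ν.edges.length + i) hqi
        simp only [List.get_eq_getElem] at e1 ⊢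
        have e2 : q.1.edges[ν.edges.length + i]'hqi = α.edges[i]'hi := by
          have e4 := List.getElem_of_eq hap.2.2 hqi
          rw [e4, List.getElem_append_right (by omega)]
          congr 1
          omega
        have e3 : y.edges (ν.edges.length + i) = x.edges i := by
          show (if h : ν.edges.length + i < ν.edges.length then _ else
            x.edges (ν.edges.length + i - ν.edges.length)) = x.edges i
          rw [dif_neg (by omega)]
          congr 1
          omega
        rw [← e2, ← e1, e3]
end

section
/- Let J be as given and suppose that every edge of the coding graph E_J is non-negative. Then E_J is left-resolving in the E-label: if ω and ξ are edges of E_J with the same range vertex, r(ω) = r(ξ), and whose source vertices (μ_1, fν_1) and (μ_2, fν_2) carry the same distinguished first edge f (equivalently, E(ω) = E(ξ)), then ω = ξ (in particular the source vertices coincide). -/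
variable {G : FinGraph}

/-- Every cylinder is nonempty (using `no_sinks`). -/
lemma exists_mem_cylinder (hG : Standing G) (p : FPath G) :
    ∃ q : IPath G, q ∈ cylinder p := by
  classical
  set n := p.edges.length with hn
  let step : G.V → G.E := fun v => (hG.no_sinks v).choose
  have hstep : ∀ v, G.src (step v) = v := fun v => (hG.no_sinks v).choose_spec
  let vseq : ℕ → G.V := fun k => Nat.rec p.range (fun _ v => G.rng (step v)) k
  have hvseq : ∀ k, vseq (k + 1) = G.rng (step (vseq k)) := fun k => rfl
  let ext : ℕ → G.E := fun k => step (vseq k)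
  let F : ℕ → G.E := fun i => if h : i < n then p.edges.get ⟨i, h⟩ else ext (i - n)
  have hchain : ∀ i, G.rng (F i) = G.src (F (i + 1)) := by
    intro i
    by_cases h1 : i + 1 < n
    · have h0 : i < n := by omega
      simp only [F, dif_pos h1, dif_pos h0]
      exact List.isChain_iff_getElem.mp p.chain i (by omega)
    · by_cases h0 : i < n
      · have hin : i = n - 1 := by omega
        have hne : p.edges ≠ [] := by
          intro h; rw [h] at hn; simp [hn] at h0
        have hrange : p.range = G.rng (p.edges.get ⟨i, h0⟩) := by
          unfold FPath.range
          rw [List.getLast?_eq_getLast hne]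
          simp only [Option.elim]
          congr 1
          rw [List.getLast_eq_getElem]
          simp only [List.get_eq_getElem]
          congr 1
          omega
        simp only [F, dif_pos h0, dif_neg h1]
        have : i + 1 - n = 0 := by omega
        rw [this]
        show G.rng (p.edges.get ⟨i, h0⟩) = G.src (step (vseq 0))
        rw [hstep]
        exact hrange ▸ rfl
      · have h2 : ¬ (i + 1 < n) := by omega
        simp only [F, dif_neg h0, dif_neg h2]
        show G.rng (step (vseq (i - n))) = G.src (step (vseq (i + 1 - n)))
        rw [hstep]
        have : i + 1 - n = (i - n) + 1 := by omega
        rw [this, hvseq]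
  refine ⟨⟨F, hchain⟩, ?_, ?_⟩
  · show G.src (F 0) = p.source
    by_cases h0 : 0 < n
    · simp only [F, dif_pos h0]
      have hne : p.edges ≠ [] := by
        intro h; rw [h] at hn; simp [hn] at h0
      apply p.head_src
      rw [List.head?_eq_head hne]
      simp only [List.get_eq_getElem, Option.mem_def, Option.some.injEq]
      rw [List.head_eq_getElem]
    · simp only [F, dif_neg h0]
      show G.src (step (vseq (0 - n))) = p.source
      have : (0 : ℕ) - n = 0 := by omega
      rw [this, hstep]
      show p.range = p.source
      have hnil : p.edges = [] := by
        exact List.length_eq_zero_iff.mp (by omega)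
      unfold FPath.range
      rw [hnil]
      rfl
  · intro i h
    simp only [F, dif_pos (show i < n from h)]

/-- Adjacency plus nonnegative degree forces the tail to be a prefix. -/
lemma tail_prefix_of_adj_nonneg {p q : FPath G × FPath G}
    (h : CGAdj p q) (hd : 0 ≤ cgDeg p q) : FPath.Prefix p.2.tail q.1 := by
  rcases h with h | h
  · exact h
  · obtain ⟨hs, hpre⟩ := h
    have hlen : p.2.tail.edges.length ≤ q.1.edges.length := by
      unfold cgDeg at hd; omega
    have heq : q.1.edges = p.2.tail.edges := hpre.eq_of_length_le hlen
    exact ⟨hs.symm, heq ▸ List.prefix_refl _⟩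

/-- Lemma 5.2: if every edge of `E_J` is non-negative, then `E_J` is
left-resolving in the `E`-label: two edges with the same range and whose source
vertices carry the same distinguished first edge coincide. -/
theorem left_resolving (G : FinGraph) (hG : Standing G)
    (J : Set (FPath G × FPath G)) (hJ : IsUnitaryJ G J)
    (hnn : AllEdgesNonneg G J)
    (p₁ p₂ q : FPath G × FPath G) (h₁ : p₁ ∈ J) (h₂ : p₂ ∈ J) (hq : q ∈ J)
    (e₁ : CGAdj p₁ q) (e₂ : CGAdj p₂ q)
    (hf : p₁.2.edges.head? = p₂.2.edges.head?) :
    p₁ = p₂ := by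
  by_contra hne
  -- tails are prefixes of q.1
  have hpre₁ : FPath.Prefix p₁.2.tail q.1 :=
    tail_prefix_of_adj_nonneg e₁ (hnn p₁ h₁ q hq e₁)
  have hpre₂ : FPath.Prefix p₂.2.tail q.1 :=
    tail_prefix_of_adj_nonneg e₂ (hnn p₂ h₂ q hq e₂)
  -- the common first edge f
  have hne₁ : p₁.2.edges ≠ [] := hJ.ne_nil p₁ h₁
  have hne₂ : p₂.2.edges ≠ [] := hJ.ne_nil p₂ h₂
  obtain ⟨f, hf₁⟩ : ∃ f, p₁.2.edges.head? = some f := by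
    cases h : p₁.2.edges with
    | nil => exact absurd h hne₁
    | cons a l => exact ⟨a, rfl⟩
  have hf₂ : p₂.2.edges.head? = some f := hf ▸ hf₁
  have hcons₁ : f :: p₁.2.edges.tail = p₁.2.edges := List.cons_head?_tail hf₁
  have hcons₂ : f :: p₂.2.edges.tail = p₂.2.edges := List.cons_head?_tail hf₂
  -- the sources of p₁.2 and p₂.2 agree
  have hsrc₁ : G.src f = p₁.2.source := p₁.2.head_src f hf₁
  have hsrc₂ : G.src f = p₂.2.source := p₂.2.head_src f hf₂
  -- the tails' edge lists
  have htails : p₁.2.tail.edges = p₁.2.edges.tail := rfl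
  have htails' : p₂.2.tail.edges = p₂.2.edges.tail := rfl
  -- edge lists of p₁.2 and p₂.2 are prefix-comparable
  have hcomp : p₁.2.edges <+: p₂.2.edges ∨ p₂.2.edges <+: p₁.2.edges := by
    have := List.prefix_or_prefix_of_prefix hpre₁.2 hpre₂.2
    rcases this with h | h
    · left
      rw [← hcons₁, ← hcons₂]
      exact (List.cons_prefix_cons).mpr ⟨rfl, h⟩
    · right
      rw [← hcons₁, ← hcons₂]
      exact (List.cons_prefix_cons).mpr ⟨rfl, h⟩
  -- it suffices to find a point in both cylinders
  have key : ∀ a b : FPath G, a.source = b.source → a.edges <+: b.edges →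
      ∃ x, x ∈ cylinder a ∩ cylinder b := by
    intro a b hsrc hpre
    obtain ⟨x, hx⟩ := exists_mem_cylinder hG b
    refine ⟨x, ⟨?_, ?_⟩, hx⟩
    · rw [hx.1, hsrc]
    · intro i hi
      have hib : i < b.edges.length := hi.trans_le hpre.length_le
      rw [hx.2 i hib]
      simp only [List.get_eq_getElem]
      exact (hpre.getElem hi).symm
  have hdisj := hJ.disj₂ p₁ h₁ p₂ h₂ hne
  have hsrc : p₁.2.source = p₂.2.source := by rw [← hsrc₁, hsrc₂]
  rcases hcomp with h | h
  · obtain ⟨x, hx⟩ := key p₁.2 p₂.2 hsrc h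
    rw [hdisj] at hx
    exact hx
  · obtain ⟨x, hx⟩ := key p₂.2 p₁.2 hsrc.symm h
    rw [Set.inter_comm, hdisj] at hx
    exact hx
end
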